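/- For every n×n complex matrix A and every ε > 0, there exists a complex symmetric matrix S (Sᵀ = S) with ‖S‖_F ≤ ε such that A + S has n distinct singular values. -/

import Mathlib

open Polynomial Finset Matrix

namespace SVAux


/-- conjugation invariance of the characteristic polynomial -/
lemma charpoly_conj {m : ℕ} (P B Q : Matrix (Fin m) (Fin m) ℂ)
    (h1 : P * Q = 1) : (P * B * Q).charpoly = B.charpoly := by
  classical
  let Cm : Matrix (Fin m) (Fin m) ℂ →+* Matrix (Fin m) (Fin m) ℂ[X] :=
    (Polynomial.C : ℂ →+* ℂ[X]).mapMatrix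
  have hPQ : Cm P * Cm Q = 1 := by rw [← _root_.map_mul, h1, _root_.map_one]
  have key : charmatrix (P * B * Q) = Cm P * charmatrix B * Cm Q := by
    unfold charmatrix
    rw [Matrix.mul_sub, Matrix.sub_mul]
    congr 1
    · have hc : Cm P * Matrix.scalar (Fin m) (X : ℂ[X]) =
          Matrix.scalar (Fin m) (X : ℂ[X]) * Cm P :=
        (Matrix.scalar_commute (X : ℂ[X]) (fun r' => Commute.all _ _) (Cm P)).symm
      rw [hc, mul_assoc, hPQ, mul_one]
    · rw [_root_.map_mul, _root_.map_mul, mul_assoc]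
  rw [Matrix.charpoly, Matrix.charpoly, key, det_mul, det_mul]
  have hdet : (Cm P).det * (Cm Q).det = 1 := by rw [← det_mul, hPQ, det_one]
  calc (Cm P).det * (charmatrix B).det * (Cm Q).det
      = (charmatrix B).det * ((Cm P).det * (Cm Q).det) := by ring
    _ = (charmatrix B).det := by rw [hdet, mul_one]

/-- charpoly of a diagonal matrix. -/
lemma charpoly_diagonal {m : ℕ} (v : Fin m → ℂ) :
    (Matrix.diagonal v).charpoly = (Multiset.map (fun a => X - Polynomial.C a)
      (Multiset.map v Finset.univ.val)).prod := by
  classical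
  have hcm : charmatrix (Matrix.diagonal v) =
      Matrix.diagonal (fun i => (X : ℂ[X]) - Polynomial.C (v i)) := by
    ext i j
    by_cases h : i = j
    · subst h; simp [charmatrix_apply_eq]
    · simp [charmatrix_apply_ne _ _ _ h, Matrix.diagonal_apply_ne _ h]
  rw [Matrix.charpoly, hcm, det_diagonal, Multiset.map_map]
  rw [Finset.prod_eq_multiset_prod]
  rfl

/-- roots of the characteristic polynomial of a Hermitian complex matrix are
its eigenvalues (with multiplicity) -/
lemma roots_charpoly_hermitian {m : ℕ} {M : Matrix (Fin m) (Fin m) ℂ} (hM : M.IsHermitian) :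
    M.charpoly.roots = Multiset.map (fun i => (hM.eigenvalues i : ℂ)) Finset.univ.val := by
  have hU1 : (hM.eigenvectorUnitary : Matrix (Fin m) (Fin m) ℂ) *
      star (hM.eigenvectorUnitary : Matrix (Fin m) (Fin m) ℂ) = 1 :=
    mem_unitaryGroup_iff.mp (hM.eigenvectorUnitary).2
  have key : M.charpoly =
      (Matrix.diagonal (RCLike.ofReal ∘ hM.eigenvalues) : Matrix (Fin m) (Fin m) ℂ).charpoly := by
    conv_lhs => rw [hM.spectral_theorem]
    exact charpoly_conj _ _ _ hU1
  rw [key, charpoly_diagonal, Polynomial.roots_multiset_prod_X_sub_C]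
  exact Multiset.map_congr rfl (fun x _ => rfl)

/-- Gershgorin-type estimate -/
lemma gersh {m : ℕ} (M : Matrix (Fin m) (Fin m) ℂ) (μ : ℂ) (w : Fin m → ℂ) (hw : w ≠ 0)
    (h : M *ᵥ w = μ • w) :
    ∃ k, w k ≠ 0 ∧
      ‖μ - M k k‖ ≤ ∑ l ∈ Finset.univ.erase k, ‖M k l‖ := by
  classical
  obtain ⟨i0, hi0⟩ : ∃ i, w i ≠ 0 := by
    by_contra hc
    push_neg at hc
    exact hw (funext fun i => hc i)
  obtain ⟨k, -, hk⟩ := Finset.exists_max_image Finset.univ (fun l => ‖w l‖)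
    ⟨i0, Finset.mem_univ _⟩
  have hwk : w k ≠ 0 := by
    intro h0
    apply hi0
    have h1 := hk i0 (Finset.mem_univ _)
    rw [h0] at h1
    simp only [norm_zero] at h1
    simpa using le_antisymm h1 (norm_nonneg _)
  refine ⟨k, hwk, ?_⟩
  have h1 : ∑ l, M k l * w l = μ * w k := by
    have := congrFun h k
    simpa [Matrix.mulVec, dotProduct, Pi.smul_apply, smul_eq_mul] using this
  have heq : (μ - M k k) * w k = ∑ l ∈ Finset.univ.erase k, M k l * w l := by
    have h2 : (∑ l ∈ Finset.univ.erase k, M k l * w l) + M k k * w k = μ * w k := by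
      rw [Finset.sum_erase_add _ _ (Finset.mem_univ k)]; exact h1
    rw [sub_mul, ← h2]; ring
  have h3 : ‖(μ - M k k) * w k‖ ≤
      (∑ l ∈ Finset.univ.erase k, ‖M k l‖) * ‖w k‖ := by
    rw [heq]
    refine le_trans (norm_sum_le _ _) ?_
    rw [Finset.sum_mul]
    refine Finset.sum_le_sum fun l _ => ?_
    rw [norm_mul]
    exact mul_le_mul_of_nonneg_left (hk l (Finset.mem_univ _)) (norm_nonneg _)
  rw [norm_mul] at h3
  have hpos : 0 < ‖w k‖ := by
    simpa [norm_pos_iff] using hwk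
  exact le_of_mul_le_mul_right h3 hpos



noncomputable def Δ (n : ℕ) : MvPolynomial (Fin n) ℂ :=
  ∏ p ∈ Finset.univ.offDiag, (MvPolynomial.X p.1 - MvPolynomial.X p.2)

lemma delta_symm (n : ℕ) : (Δ n).IsSymmetric := by
  intro e
  unfold Δ
  rw [_root_.map_prod]
  simp only [map_sub, MvPolynomial.rename_X]
  refine Finset.prod_bij' (fun p _ => (e p.1, e p.2)) (fun p _ => (e.symm p.1, e.symm p.2))
    ?_ ?_ ?_ ?_ ?_
  · intro a ha
    obtain ⟨-, -, hne⟩ := Finset.mem_offDiag.mp ha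
    exact Finset.mem_offDiag.mpr ⟨Finset.mem_univ _, Finset.mem_univ _, fun h => hne (e.injective h)⟩
  · intro a ha
    obtain ⟨-, -, hne⟩ := Finset.mem_offDiag.mp ha
    exact Finset.mem_offDiag.mpr ⟨Finset.mem_univ _, Finset.mem_univ _,
      fun h => hne (e.symm.injective h)⟩
  · intro a ha; simp
  · intro a ha; simp
  · intro a ha; rfl

lemma multiset_exists_enum {α : Type*} {s : Multiset α} {n : ℕ} (h : Multiset.card s = n) :
    ∃ μ : Fin n → α, Multiset.map μ Finset.univ.val = s := by
  have hlen : s.toList.length = n := by rw [Multiset.length_toList, h]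
  subst hlen
  exact ⟨s.toList.get, by rw [Fin.univ_val_map, List.ofFn_get, Multiset.coe_toList]⟩

noncomputable def detec (n : ℕ) (q : MvPolynomial (Fin n) ℂ) {R : Type*} [CommRing R]
    [Algebra ℂ R] (p : Polynomial R) : R :=
  MvPolynomial.aeval (fun i : Fin n => (-1 : R) ^ ((i : ℕ) + 1) * p.coeff (n - ((i : ℕ) + 1))) q

lemma detec_charpoly_ne_zero_iff (n : ℕ) (q : MvPolynomial (Fin n) ℂ)
    (hq : MvPolynomial.aeval
      (fun i : Fin n => MvPolynomial.esymm (Fin n) ℂ ((i : ℕ) + 1)) q = Δ n)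
    (M : Matrix (Fin n) (Fin n) ℂ) :
    detec n q M.charpoly ≠ 0 ↔ M.charpoly.roots.Nodup := by
  classical
  set p := M.charpoly with hp
  have hmonic : p.Monic := M.charpoly_monic
  have hdeg : p.natDegree = n := by rw [hp, Matrix.charpoly_natDegree_eq_dim, Fintype.card_fin]
  have hsplits : p.Splits := IsAlgClosed.splits p
  have hcard : Multiset.card p.roots = n := by
    rw [Polynomial.splits_iff_card_roots.mp hsplits, hdeg]
  obtain ⟨μ, hμ⟩ := multiset_exists_enum hcard
  have hcoeff : ∀ i : Fin n,
      (-1 : ℂ) ^ ((i : ℕ) + 1) * p.coeff (n - ((i : ℕ) + 1)) = p.roots.esymm ((i : ℕ) + 1) := by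
    intro i
    have hle : (i : ℕ) + 1 ≤ n := i.isLt
    have h1 : n - ((i : ℕ) + 1) ≤ p.natDegree := by rw [hdeg]; omega
    have h2 := Polynomial.coeff_eq_esymm_roots_of_card (by rw [hcard, hdeg]) h1
    rw [h2, hmonic.leadingCoeff, one_mul, hdeg]
    have h3 : n - (n - ((i : ℕ) + 1)) = (i : ℕ) + 1 := by omega
    rw [h3, ← mul_assoc, ← pow_add]
    have hev : Even ((i : ℕ) + 1 + ((i : ℕ) + 1)) := ⟨(i : ℕ) + 1, rfl⟩
    rw [hev.neg_one_pow, one_mul]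
  have hesymm : ∀ k : ℕ,
      p.roots.esymm k = MvPolynomial.aeval μ (MvPolynomial.esymm (Fin n) ℂ k) := by
    intro k; rw [MvPolynomial.aeval_esymm_eq_multiset_esymm, hμ]
  have hdet : detec n q p = MvPolynomial.aeval μ (Δ n) := by
    unfold detec
    have hfun : (fun i : Fin n => (-1 : ℂ) ^ ((i : ℕ) + 1) * p.coeff (n - ((i : ℕ) + 1)))
        = fun i : Fin n =>
          (MvPolynomial.aeval μ) (MvPolynomial.esymm (Fin n) ℂ ((i : ℕ) + 1)) := by
      funext i; rw [hcoeff i, hesymm]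
    rw [hfun, ← hq, ← MvPolynomial.comp_aeval]
    rfl
  have hΔ : MvPolynomial.aeval μ (Δ n) = ∏ pq ∈ Finset.univ.offDiag, (μ pq.1 - μ pq.2) := by
    unfold Δ
    rw [_root_.map_prod]
    simp
  rw [hdet, hΔ, Finset.prod_ne_zero_iff]
  constructor
  · intro h
    rw [← hμ]
    rw [Multiset.nodup_map_iff_inj_on Finset.univ.nodup]
    intro x _ y _ hxy
    by_contra hne
    exact h (x, y) (Finset.mem_offDiag.mpr ⟨Finset.mem_univ _, Finset.mem_univ _, hne⟩)
      (sub_eq_zero_of_eq hxy)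
  · intro hnd pq hmem h0
    rw [← hμ] at hnd
    have hinj := (Multiset.nodup_map_iff_inj_on Finset.univ.nodup).mp hnd
    obtain ⟨-, -, hne⟩ := Finset.mem_offDiag.mp hmem
    exact hne (hinj _ (Finset.mem_val.mpr (Finset.mem_univ _)) _
      (Finset.mem_val.mpr (Finset.mem_univ _)) (sub_eq_zero.mp h0))

lemma eval_detec (n : ℕ) (q : MvPolynomial (Fin n) ℂ) (p : Polynomial (Polynomial ℂ)) (z : ℂ) :
    Polynomial.eval z (detec n q p) = detec n q (p.map (Polynomial.evalRingHom z)) := by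
  unfold detec
  have hφ : ∀ r : Polynomial ℂ, Polynomial.eval z r = Polynomial.aeval z r := by
    intro r; rw [Polynomial.coe_aeval_eq_eval]
  rw [hφ]
  have step : (Polynomial.aeval z)
      ((MvPolynomial.aeval fun i : Fin n =>
        (-1 : Polynomial ℂ) ^ ((i : ℕ) + 1) * p.coeff (n - ((i : ℕ) + 1))) q)
      = (MvPolynomial.aeval fun i : Fin n =>
          (Polynomial.aeval z)
            ((-1 : Polynomial ℂ) ^ ((i : ℕ) + 1) * p.coeff (n - ((i : ℕ) + 1)))) q := by
    rw [← MvPolynomial.comp_aeval]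
    rfl
  rw [step]
  have hfun : (fun i : Fin n => (Polynomial.aeval z)
        ((-1 : Polynomial ℂ) ^ ((i : ℕ) + 1) * p.coeff (n - ((i : ℕ) + 1))))
      = fun i : Fin n => (-1 : ℂ) ^ ((i : ℕ) + 1) *
          (Polynomial.map (Polynomial.evalRingHom z) p).coeff (n - ((i : ℕ) + 1)) := by
    funext i
    simp [Polynomial.coeff_map, Polynomial.coe_aeval_eq_eval]
  rw [hfun]



lemma exists_q (n : ℕ) : ∃ q : MvPolynomial (Fin n) ℂ,
    MvPolynomial.aeval (fun i : Fin n => MvPolynomial.esymm (Fin n) ℂ ((i : ℕ) + 1)) q = Δ n := by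
  obtain ⟨q, hq⟩ := MvPolynomial.esymmAlgHom_surjective (σ := Fin n) ℂ (n := n)
    (by rw [Fintype.card_fin])
    ⟨Δ n, (MvPolynomial.mem_symmetricSubalgebra _).mpr (delta_symm n)⟩
  refine ⟨q, ?_⟩
  have h := congrArg Subtype.val hq
  rw [MvPolynomial.esymmAlgHom_apply] at h
  exact h

noncomputable def dd (n : ℕ) : Fin n → ℂ := fun i => (i : ℕ) + 1

noncomputable def DD (n : ℕ) : Matrix (Fin n) (Fin n) ℂ := Matrix.diagonal (dd n)

noncomputable def c1 {n : ℕ} (A : Matrix (Fin n) (Fin n) ℂ) : ℝ :=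
  ∑ i, ∑ j, ‖(Aᴴ * A) i j‖

noncomputable def c2 {n : ℕ} (A : Matrix (Fin n) (Fin n) ℂ) : ℝ :=
  ∑ i, ∑ j, ‖(Aᴴ * DD n + DD n * A) i j‖

lemma c1_nonneg {n : ℕ} (A : Matrix (Fin n) (Fin n) ℂ) : 0 ≤ c1 A :=
  Finset.sum_nonneg fun _ _ => Finset.sum_nonneg fun _ _ => norm_nonneg _

lemma c2_nonneg {n : ℕ} (A : Matrix (Fin n) (Fin n) ℂ) : 0 ≤ c2 A :=
  Finset.sum_nonneg fun _ _ => Finset.sum_nonneg fun _ _ => norm_nonneg _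

lemma DD_conjTranspose (n : ℕ) : (DD n)ᴴ = DD n := by
  unfold DD
  ext i j
  rcases eq_or_ne i j with h | h
  · subst h
    simp [Matrix.conjTranspose_apply, Matrix.diagonal_apply_eq, dd, Complex.star_def,
      map_add, Complex.conj_natCast, _root_.map_one]
  · simp [Matrix.conjTranspose_apply, Matrix.diagonal_apply_ne _ h,
      Matrix.diagonal_apply_ne _ (Ne.symm h)]

lemma expandM {n : ℕ} (A : Matrix (Fin n) (Fin n) ℂ) (t : ℝ) :
    (A + (t : ℂ) • DD n)ᴴ * (A + (t : ℂ) • DD n)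
      = Aᴴ * A + (t : ℂ) • (Aᴴ * DD n + DD n * A)
        + Matrix.diagonal (fun i => (t : ℂ) ^ 2 * (dd n i) ^ 2) := by
  have hct : (A + (t : ℂ) • DD n)ᴴ = Aᴴ + (t : ℂ) • DD n := by
    rw [Matrix.conjTranspose_add, Matrix.conjTranspose_smul, DD_conjTranspose]
    congr 1
    simp [Complex.conj_ofReal]
  rw [hct, add_mul, mul_add, mul_add, Matrix.mul_smul, Matrix.smul_mul, Matrix.smul_mul,
    Matrix.mul_smul, smul_smul]
  have hDsq : ((t : ℂ) * (t : ℂ)) • (DD n * DD n)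
      = Matrix.diagonal (fun i => (t : ℂ) ^ 2 * (dd n i) ^ 2) := by
    unfold DD
    rw [Matrix.diagonal_mul_diagonal]
    ext i j
    rcases eq_or_ne i j with h | h
    · subst h
      simp only [Matrix.smul_apply, Matrix.diagonal_apply_eq, smul_eq_mul]
      ring
    · simp [Matrix.smul_apply, Matrix.diagonal_apply_ne _ h]
  rw [hDsq, smul_add]
  abel

lemma rowsum_le {n : ℕ} (B : Matrix (Fin n) (Fin n) ℂ) (k : Fin n) :
    ∑ l, ‖B k l‖ ≤ ∑ i, ∑ j, ‖B i j‖ :=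
  Finset.single_le_sum (f := fun i => ∑ j, ‖B i j‖)
    (fun i _ => Finset.sum_nonneg fun _ _ => norm_nonneg _) (Finset.mem_univ k)

lemma localize {n : ℕ} (A : Matrix (Fin n) (Fin n) ℂ) (t : ℝ) (ht : 0 ≤ t) (lam : ℝ)
    (w : Fin n → ℂ) (hw : w ≠ 0)
    (heig : ((A + (t : ℂ) • DD n)ᴴ * (A + (t : ℂ) • DD n)) *ᵥ w = ((lam : ℂ)) • w) :
    ∃ k, w k ≠ 0 ∧
      ‖(lam : ℂ) - (t : ℂ) ^ 2 * (dd n k) ^ 2‖ ≤ c1 A + t * c2 A := by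
  obtain ⟨k, hwk, hball⟩ := gersh _ _ w hw heig
  refine ⟨k, hwk, ?_⟩
  have hM := expandM A t
  set P := Aᴴ * A with hP
  set Q := Aᴴ * DD n + DD n * A with hQ
  have hMapp : ∀ i j, ((A + (t : ℂ) • DD n)ᴴ * (A + (t : ℂ) • DD n)) i j
      = P i j + (t : ℂ) * Q i j + (if i = j then (t : ℂ) ^ 2 * (dd n i) ^ 2 else 0) := by
    intro i j
    rw [hM]
    simp [Matrix.add_apply, Matrix.smul_apply, Matrix.diagonal_apply, smul_eq_mul]
  have habs_t : ‖(t : ℂ)‖ = t := by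
    rw [Complex.norm_real, Real.norm_eq_abs, abs_of_nonneg ht]
  have hoff : ∀ l, l ≠ k → ‖((A + (t : ℂ) • DD n)ᴴ * (A + (t : ℂ) • DD n)) k l‖
      ≤ ‖P k l‖ + t * ‖Q k l‖ := by
    intro l hl
    rw [hMapp k l, if_neg (fun h => hl h.symm), add_zero]
    refine le_trans (norm_add_le _ _) ?_
    rw [norm_mul, habs_t]
  have hdiag : ((A + (t : ℂ) • DD n)ᴴ * (A + (t : ℂ) • DD n)) k k
      = P k k + (t : ℂ) * Q k k + (t : ℂ) ^ 2 * (dd n k) ^ 2 := by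
    rw [hMapp k k, if_pos rfl]
  have h4 : (lam : ℂ) - (t : ℂ) ^ 2 * (dd n k) ^ 2
      = ((lam : ℂ) - ((A + (t : ℂ) • DD n)ᴴ * (A + (t : ℂ) • DD n)) k k)
        + (P k k + (t : ℂ) * Q k k) := by
    rw [hdiag]; ring
  rw [h4]
  refine le_trans (norm_add_le _ _) ?_
  have h5 : ‖P k k + (t : ℂ) * Q k k‖
      ≤ ‖P k k‖ + t * ‖Q k k‖ := by
    refine le_trans (norm_add_le _ _) ?_
    rw [norm_mul, habs_t]
  have h6 : (∑ l ∈ Finset.univ.erase k,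
        ‖((A + (t : ℂ) • DD n)ᴴ * (A + (t : ℂ) • DD n)) k l‖)
      ≤ ∑ l ∈ Finset.univ.erase k, (‖P k l‖ + t * ‖Q k l‖) := by
    refine Finset.sum_le_sum fun l hl => hoff l (Finset.ne_of_mem_erase hl)
  have h7 : (∑ l ∈ Finset.univ.erase k, (‖P k l‖ + t * ‖Q k l‖))
        + (‖P k k‖ + t * ‖Q k k‖)
      = ∑ l, (‖P k l‖ + t * ‖Q k l‖) := by
    rw [Finset.sum_erase_add _ _ (Finset.mem_univ k)]
  have h8 : ∑ l, (‖P k l‖ + t * ‖Q k l‖) ≤ c1 A + t * c2 A := by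
    rw [Finset.sum_add_distrib, ← Finset.mul_sum]
    have := rowsum_le P k
    have := rowsum_le Q k
    have h9 : t * (∑ l, ‖Q k l‖) ≤ t * c2 A :=
      mul_le_mul_of_nonneg_left (rowsum_le Q k) ht
    exact add_le_add (rowsum_le P k) h9
  linarith [norm_add_le ((lam : ℂ) -
    ((A + (t : ℂ) • DD n)ᴴ * (A + (t : ℂ) • DD n)) k k) (P k k + (t : ℂ) * Q k k), hball]



lemma nat_gap {a b : ℕ} (h : a < b) : ((a : ℝ) + 1) ^ 2 + 3 ≤ ((b : ℝ) + 1) ^ 2 := by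
  have h2 : ((a : ℕ) : ℝ) + 1 ≤ ((b : ℕ) : ℝ) := by exact_mod_cast h
  have h0 : (0 : ℝ) ≤ ((a : ℕ) : ℝ) := Nat.cast_nonneg _
  nlinarith

lemma gap {n : ℕ} {k k' : Fin n} (h : k ≠ k') :
    3 ≤ |((k : ℕ) + 1 : ℝ) ^ 2 - ((k' : ℕ) + 1 : ℝ) ^ 2| := by
  have hne : (k : ℕ) ≠ (k' : ℕ) := fun hc => h (Fin.ext hc)
  rcases Nat.lt_or_ge (k : ℕ) (k' : ℕ) with hlt | hge
  · have := nat_gap hlt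
    rw [abs_sub_comm, abs_of_nonneg (by linarith)]
    linarith
  · have hlt : (k' : ℕ) < (k : ℕ) := lt_of_le_of_ne hge (Ne.symm hne)
    have := nat_gap hlt
    rw [abs_of_nonneg (by linarith)]
    linarith

lemma nodup_at_t0 {n : ℕ} (A : Matrix (Fin n) (Fin n) ℂ) :
    ∃ t0 : ℝ, 0 < t0 ∧
      ((A + (t0 : ℂ) • DD n)ᴴ * (A + (t0 : ℂ) • DD n)).charpoly.roots.Nodup := by
  classical
  set t0 : ℝ := c1 A + c2 A + 1 with ht0
  have hc1 := c1_nonneg A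
  have hc2 := c2_nonneg A
  have ht0pos : 0 < t0 := by linarith
  refine ⟨t0, ht0pos, ?_⟩
  set B := A + (t0 : ℂ) • DD n with hB
  have hherm : (Bᴴ * B).IsHermitian := isHermitian_conjTranspose_mul_self B
  rw [roots_charpoly_hermitian hherm]
  refine Multiset.Nodup.map ?_ Finset.univ.nodup
  have hinj : Function.Injective hherm.eigenvalues := by
    intro i j hij
    by_contra hne
    set b := hherm.eigenvectorBasis with hb
    set lam : ℝ := hherm.eigenvalues i with hlam
    set u : Fin n → ℂ := (WithLp.equiv 2 (Fin n → ℂ)) (b i) with hu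
    set v : Fin n → ℂ := (WithLp.equiv 2 (Fin n → ℂ)) (b j) with hv
    have horth := hherm.eigenvectorBasis.orthonormal
    have heigu : (Bᴴ * B) *ᵥ u = ((lam : ℂ)) • u := by
      have := hherm.mulVec_eigenvectorBasis i
      change (Bᴴ * B) *ᵥ u = lam • u at this
      rw [this]
      funext l
      simp [Pi.smul_apply, Complex.real_smul]
    have heigv : (Bᴴ * B) *ᵥ v = ((lam : ℂ)) • v := by
      have h := hherm.mulVec_eigenvectorBasis j
      change (Bᴴ * B) *ᵥ v = hherm.eigenvalues j • v at h
      rw [← hij] at h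
      rw [h]
      funext l
      simp [Pi.smul_apply, Complex.real_smul]
    have hbu : ∀ W : EuclideanSpace ℂ (Fin n),
        ((WithLp.equiv 2 (Fin n → ℂ)) W = 0) → W = 0 := by
      intro W hW
      exact (WithLp.equiv 2 (Fin n → ℂ)).injective (by simpa using hW)
    have hune : u ≠ 0 := by
      intro h0
      have hb0 : b i = 0 := hbu _ h0
      have := horth.1 i
      rw [hb0] at this
      simp at this
    obtain ⟨k, huk, hballu⟩ := localize A t0 (le_of_lt ht0pos) lam u hune heigu
    -- build second eigenvector vanishing at k
    set W : EuclideanSpace ℂ (Fin n) := u k • (b j) - v k • (b i) with hW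
    set w : Fin n → ℂ := (WithLp.equiv 2 (Fin n → ℂ)) W with hw
    have hwfun : w = fun l => u k * v l - v k * u l := by
      funext l
      simp [hw, hW, hu, hv, WithLp.equiv_apply, PiLp.sub_apply, PiLp.smul_apply,
        smul_eq_mul]
    have hwk0 : w k = 0 := by rw [hwfun]; ring
    have hwne : w ≠ 0 := by
      intro h0
      have hW0 : W = 0 := hbu _ h0
      have hin : inner ℂ (b j) W = (u k : ℂ) := by
        rw [hW]
        rw [inner_sub_right, inner_smul_right, inner_smul_right]
        rw [orthonormal_iff_ite.mp horth j j, orthonormal_iff_ite.mp horth j i]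
        simp [Ne.symm hne]
      rw [hW0, inner_zero_right] at hin
      exact huk hin.symm
    have heigw : (Bᴴ * B) *ᵥ w = ((lam : ℂ)) • w := by
      rw [hwfun]
      have hcomb : (fun l => u k * v l - v k * u l) = (u k) • v - (v k) • u := by
        funext l; simp [Pi.smul_apply, smul_eq_mul, Pi.sub_apply]
      rw [hcomb, Matrix.mulVec_sub, Matrix.mulVec_smul, Matrix.mulVec_smul, heigu, heigv]
      funext l
      simp [Pi.smul_apply, smul_eq_mul, Pi.sub_apply]
      ring
    obtain ⟨k', hwk', hballw⟩ := localize A t0 (le_of_lt ht0pos) lam w hwne heigw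
    have hkk' : k' ≠ k := fun hc => hwk' (hc ▸ hwk0)
    -- numeric contradiction
    have key : ‖(t0 : ℂ) ^ 2 * (dd n k) ^ 2 - (t0 : ℂ) ^ 2 * (dd n k') ^ 2‖
        ≤ 2 * (c1 A + t0 * c2 A) := by
      have h1 : (t0 : ℂ) ^ 2 * (dd n k) ^ 2 - (t0 : ℂ) ^ 2 * (dd n k') ^ 2
          = ((lam : ℂ) - (t0 : ℂ) ^ 2 * (dd n k') ^ 2)
            - ((lam : ℂ) - (t0 : ℂ) ^ 2 * (dd n k) ^ 2) := by ring
      rw [h1]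
      have htr : ‖((lam : ℂ) - (t0 : ℂ) ^ 2 * (dd n k') ^ 2)
            - ((lam : ℂ) - (t0 : ℂ) ^ 2 * (dd n k) ^ 2)‖
          ≤ ‖(lam : ℂ) - (t0 : ℂ) ^ 2 * (dd n k') ^ 2‖
            + ‖(lam : ℂ) - (t0 : ℂ) ^ 2 * (dd n k) ^ 2‖ := by
        rw [sub_eq_add_neg]
        refine le_trans (norm_add_le _ _) ?_
        rw [norm_neg]
      linarith
    have hlhs : t0 ^ 2 * 3 ≤ ‖(t0 : ℂ) ^ 2 * (dd n k) ^ 2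
        - (t0 : ℂ) ^ 2 * (dd n k') ^ 2‖ := by
      have hcast : (t0 : ℂ) ^ 2 * (dd n k) ^ 2 - (t0 : ℂ) ^ 2 * (dd n k') ^ 2
          = ((t0 ^ 2 * (((k : ℕ) + 1 : ℝ) ^ 2 - ((k' : ℕ) + 1 : ℝ) ^ 2) : ℝ) : ℂ) := by
        simp [dd]
        push_cast
        ring
      rw [hcast, Complex.norm_real, Real.norm_eq_abs, abs_mul, abs_of_nonneg (sq_nonneg t0)]
      have hg := gap (n := n) (k := k) (k' := k') (fun hc => hkk' hc.symm)
      calc t0 ^ 2 * 3 ≤ t0 ^ 2 * |((k : ℕ) + 1 : ℝ) ^ 2 - ((k' : ℕ) + 1 : ℝ) ^ 2| :=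
            mul_le_mul_of_nonneg_left hg (sq_nonneg t0)
        _ = _ := rfl
    have hfin : (3 : ℝ) * t0 ^ 2 ≤ 2 * (c1 A + t0 * c2 A) := by
      calc (3 : ℝ) * t0 ^ 2 = t0 ^ 2 * 3 := by ring
        _ ≤ _ := le_trans hlhs key
    nlinarith [hfin, hc1, hc2, ht0]
  exact fun i j hij => hinj (Complex.ofReal_injective hij)



/-- the polynomial-entry family -/
noncomputable def Np {n : ℕ} (A : Matrix (Fin n) (Fin n) ℂ) :
    Matrix (Fin n) (Fin n) (Polynomial ℂ) :=
  (Aᴴ.map Polynomial.C + (Polynomial.X : Polynomial ℂ) • (DD n).map Polynomial.C) *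
    (A.map Polynomial.C + (Polynomial.X : Polynomial ℂ) • (DD n).map Polynomial.C)

lemma Np_map {n : ℕ} (A : Matrix (Fin n) (Fin n) ℂ) (t : ℝ) :
    (Np A).map (Polynomial.eval ((t : ℂ))) = (A + (t : ℂ) • DD n)ᴴ * (A + (t : ℂ) • DD n) := by
  have hpiece : ∀ B : Matrix (Fin n) (Fin n) ℂ,
      (B.map Polynomial.C + (Polynomial.X : Polynomial ℂ) • (DD n).map Polynomial.C).map
        (Polynomial.eval ((t : ℂ))) = B + (t : ℂ) • DD n := by
    intro B
    ext i j
    simp [Matrix.map_apply, Matrix.add_apply, Matrix.smul_apply, smul_eq_mul]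
    ring
  have hct : (A + (t : ℂ) • DD n)ᴴ = Aᴴ + (t : ℂ) • DD n := by
    rw [Matrix.conjTranspose_add, Matrix.conjTranspose_smul, DD_conjTranspose]
    congr 1
    simp [Complex.conj_ofReal]
  unfold Np
  rw [show (Polynomial.eval ((t : ℂ)) : Polynomial ℂ → ℂ)
    = ⇑(Polynomial.evalRingHom ((t : ℂ))) from rfl]
  rw [Matrix.map_mul]
  rw [show ⇑(Polynomial.evalRingHom ((t : ℂ))) = (Polynomial.eval ((t : ℂ)) : Polynomial ℂ → ℂ)
    from rfl]
  rw [hct, hpiece, hpiece]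

theorem main (n : ℕ)
    (A : Matrix (Fin n) (Fin n) ℂ) (ε : ℝ) (hε : 0 < ε) :
    ∃ S : Matrix (Fin n) (Fin n) ℂ, Sᵀ = S ∧
      Real.sqrt (∑ i, ∑ j, ‖S i j‖ ^ 2) ≤ ε ∧
      ((A + S)ᴴ * (A + S)).charpoly.roots.Nodup := by
  classical
  obtain ⟨q, hq⟩ := exists_q n
  set F : Polynomial ℂ := detec n q (Np A).charpoly with hF
  have heval : ∀ t : ℝ, Polynomial.eval ((t : ℂ)) F
      = detec n q ((A + (t : ℂ) • DD n)ᴴ * (A + (t : ℂ) • DD n)).charpoly := by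
    intro t
    rw [hF, eval_detec]
    congr 1
    rw [← Np_map A t, ← Matrix.charpoly_map]
    rfl
  obtain ⟨t0, ht0pos, ht0⟩ := nodup_at_t0 A
  have hFne : F ≠ 0 := by
    intro h0
    have h1 := heval t0
    rw [h0, Polynomial.eval_zero] at h1
    exact ((detec_charpoly_ne_zero_iff n q hq _).mpr ht0) h1.symm
  -- choose small t avoiding roots of F
  set Sr : ℝ := ∑ i : Fin n, ((i : ℕ) + 1 : ℝ) ^ 2 with hSr
  have hSgnn : 0 ≤ Sr := Finset.sum_nonneg fun _ _ => sq_nonneg _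
  have hsq : 0 ≤ Real.sqrt Sr := Real.sqrt_nonneg _
  set δ : ℝ := ε / (Real.sqrt Sr + 1) with hδ
  have hδpos : 0 < δ := div_pos hε (by linarith)
  have hbadfin : {t : ℝ | Polynomial.eval ((t : ℂ)) F = 0}.Finite := by
    have hsub : {t : ℝ | Polynomial.eval ((t : ℂ)) F = 0}
        ⊆ (fun t : ℝ => (t : ℂ)) ⁻¹' {z : ℂ | F.IsRoot z} := fun t ht => ht
    refine Set.Finite.subset ?_ hsub
    exact Set.Finite.preimage (Set.injOn_of_injective Complex.ofReal_injective)
      (Polynomial.finite_setOf_isRoot hFne)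
  have hinf : (Set.Ioo (0 : ℝ) δ).Infinite := Set.Ioo.infinite hδpos |> Set.infinite_coe_iff.mp
  obtain ⟨t, ht⟩ := (hinf.diff hbadfin).nonempty
  obtain ⟨⟨htpos, htlt⟩, htgood⟩ := ht
  refine ⟨(t : ℂ) • DD n, ?_, ?_, ?_⟩
  · rw [Matrix.transpose_smul]
    congr 1
    exact Matrix.diagonal_transpose _
  · have hentry : ∀ i j : Fin n, ‖((t : ℂ) • DD n) i j‖ ^ 2
        = if j = i then t ^ 2 * ((i : ℕ) + 1 : ℝ) ^ 2 else 0 := by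
      intro i j
      rcases eq_or_ne j i with h | h
      · subst h
        rw [if_pos rfl]
        have : ((t : ℂ) • DD n) j j = ((t * ((j : ℕ) + 1 : ℝ) : ℝ) : ℂ) := by
          simp only [DD, dd, Matrix.smul_apply, Matrix.diagonal_apply_eq, smul_eq_mul]
          push_cast
          ring
        rw [this, Complex.norm_real, Real.norm_eq_abs, sq_abs]
        ring
      · rw [if_neg h]
        have : ((t : ℂ) • DD n) i j = 0 := by
          simp [DD, Matrix.smul_apply, Matrix.diagonal_apply_ne _ (Ne.symm h)]
        rw [this]
        simp
    have hsum : ∑ i, ∑ j, ‖((t : ℂ) • DD n) i j‖ ^ 2 = t ^ 2 * Sr := by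
      rw [hSr, Finset.mul_sum]
      refine Finset.sum_congr rfl fun i _ => ?_
      rw [Finset.sum_congr rfl fun j _ => hentry i j]
      simp [Finset.sum_ite_eq]
    rw [hsum, Real.sqrt_mul (sq_nonneg t), Real.sqrt_sq (le_of_lt htpos)]
    have h1 : t * Real.sqrt Sr ≤ t * (Real.sqrt Sr + 1) :=
      mul_le_mul_of_nonneg_left (by linarith) (le_of_lt htpos)
    have h2 : t * (Real.sqrt Sr + 1) ≤ δ * (Real.sqrt Sr + 1) :=
      mul_le_mul_of_nonneg_right (le_of_lt htlt) (by linarith)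
    have h3 : δ * (Real.sqrt Sr + 1) = ε := by
      rw [hδ]
      field_simp
    linarith
  · refine (detec_charpoly_ne_zero_iff n q hq _).mp ?_
    rw [← heval t]
    exact fun h0 => htgood h0


end SVAux

open Matrix

/-- for every `n × n` complex matrix `A` and every `ε > 0` there is
a complex symmetric matrix `S` with Frobenius norm at most `ε` such that `A + S`
has `n` distinct singular values. -/
theorem exists_symmetric_perturbation_distinct_singular_values (n : ℕ)
    (A : Matrix (Fin n) (Fin n) ℂ) (ε : ℝ) (hε : 0 < ε) :
    ∃ S : Matrix (Fin n) (Fin n) ℂ, Sᵀ = S ∧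
      Real.sqrt (∑ i, ∑ j, ‖S i j‖ ^ 2) ≤ ε ∧
      ((A + S)ᴴ * (A + S)).charpoly.roots.Nodup :=
  SVAux.main n A ε hε
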